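/- For every integer k ≥ 0 and every p ∈ [0,1), there exists a unique x ∈ (0,1) such that f_k(x,p) = 0. In particular the sequence (p_k) is well-defined. -/

import Mathlib

/-- `B r s p = ∑_{i=0}^{s-1} C(r,i) p^{r-i} (1-p)^i`, the probability that a
Binomial(r,p) random variable exceeds `r - s`. -/
noncomputable def B (r s : ℕ) (p : ℝ) : ℝ :=
  ∑ i ∈ Finset.range s, (r.choose i : ℝ) * p ^ (r - i) * (1 - p) ^ i

/-- `f k (x, p) = (k+1) B_{r,s}(p) - k B_{r,s}(x) - 2x + 1`. -/
noncomputable def f (r s k : ℕ) (x p : ℝ) : ℝ :=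
  ((k : ℝ) + 1) * B r s p - (k : ℝ) * B r s x - 2 * x + 1

lemma hasDerivAt_B (r s : ℕ) (hrs : s ≤ r) (x : ℝ) :
    HasDerivAt (fun y => B r s y)
      ((s : ℝ) * (r.choose s : ℝ) * x ^ (r - s) * (1 - x) ^ (s - 1)) x := by
  set D : ℕ → ℝ := fun i => (i : ℝ) * (r.choose i : ℝ) * x ^ (r - i) * (1 - x) ^ (i - 1)
    with hD
  have key : ∀ i ∈ Finset.range s,
      HasDerivAt (fun y : ℝ => (r.choose i : ℝ) * y ^ (r - i) * (1 - y) ^ i)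
        (D (i + 1) - D i) x := by
    intro i hi
    have hir : i < r := lt_of_lt_of_le (Finset.mem_range.mp hi) hrs
    have h1 : HasDerivAt (fun y : ℝ => (r.choose i : ℝ) * y ^ (r - i))
        ((r.choose i : ℝ) * (((r - i : ℕ) : ℝ) * x ^ (r - i - 1))) x :=
      (hasDerivAt_pow (r - i) x).const_mul _
    have h2 : HasDerivAt (fun y : ℝ => (1 - y) ^ i)
        ((i : ℝ) * (1 - x) ^ (i - 1) * (-1)) x := by
      have := ((hasDerivAt_id x).const_sub (1 : ℝ)).fun_pow i
      simpa using this
    have h3 := h1.fun_mul h2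
    refine HasDerivAt.congr_deriv h3 ?_
    symm
    have hc : ((r.choose (i + 1) : ℝ)) * ((i : ℝ) + 1) = (r.choose i : ℝ) * ((r : ℝ) - i) := by
      have h' : (r.choose (i + 1) * (i + 1) : ℕ) = r.choose i * (r - i) :=
        Nat.choose_succ_right_eq r i
      have := congrArg (Nat.cast : ℕ → ℝ) h'
      push_cast [Nat.cast_sub hir.le] at this
      exact this
    have he : r - (i + 1) = r - i - 1 := (Nat.sub_sub r i 1).symm
    have hcast : ((r - i : ℕ) : ℝ) = (r : ℝ) - i := Nat.cast_sub hir.le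
    simp only [hD, he, hcast]
    push_cast [Nat.add_sub_cancel]
    linear_combination (x ^ (r - i - 1) * (1 - x) ^ i) * hc
  have hsum := HasDerivAt.fun_sum key
  have hval : ∑ i ∈ Finset.range s, (D (i + 1) - D i) = D s := by
    rw [Finset.sum_range_sub]
    simp [hD]
  rw [hval] at hsum
  exact hsum

example : True := trivial

lemma B_zero (r s : ℕ) (hrs : s ≤ r) : B r s 0 = 0 := by
  unfold B
  refine Finset.sum_eq_zero fun i hi => ?_
  have hir : i < r := lt_of_lt_of_le (Finset.mem_range.mp hi) hrs
  rw [zero_pow (Nat.sub_ne_zero_of_lt hir)]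
  ring

lemma B_one (r s : ℕ) (hs : 1 ≤ s) : B r s 1 = 1 := by
  unfold B
  rw [Finset.sum_eq_single_of_mem 0 (Finset.mem_range.mpr hs)]
  · simp
  · intro i _ hi
    simp [zero_pow hi]

lemma B_nonneg (r s : ℕ) (p : ℝ) (h0 : 0 ≤ p) (h1 : p ≤ 1) : 0 ≤ B r s p := by
  unfold B
  refine Finset.sum_nonneg fun i _ => ?_
  have : (0:ℝ) ≤ 1 - p := by linarith
  positivity

lemma B_lt_one (r s : ℕ) (hs : 1 ≤ s) (hrs : s ≤ r) (p : ℝ) (h0 : 0 ≤ p) (h1 : p < 1) :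
    B r s p < 1 := by
  have h1p : (0:ℝ) < 1 - p := by linarith
  have htotal : ∑ i ∈ Finset.range (r + 1),
      (r.choose i : ℝ) * p ^ (r - i) * (1 - p) ^ i = 1 := by
    have := add_pow (1 - p) p r
    simp only [sub_add_cancel, one_pow] at this
    have heq : ∑ i ∈ Finset.range (r + 1), (r.choose i : ℝ) * p ^ (r - i) * (1 - p) ^ i
        = ∑ m ∈ Finset.range (r + 1), (1 - p) ^ m * p ^ (r - m) * (r.choose m : ℝ) :=
      Finset.sum_congr rfl fun i _ => by ring
    rw [heq]
    exact this.symm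
  have hsplit : ∑ i ∈ Finset.range (r + 1),
      (r.choose i : ℝ) * p ^ (r - i) * (1 - p) ^ i
      = B r s p + ∑ i ∈ Finset.Ico s (r + 1),
        (r.choose i : ℝ) * p ^ (r - i) * (1 - p) ^ i := by
    unfold B
    rw [Finset.range_eq_Ico, ← Finset.sum_Ico_consecutive _ (Nat.zero_le s) (by omega), Finset.range_eq_Ico]
  have htail : (0:ℝ) < ∑ i ∈ Finset.Ico s (r + 1),
      (r.choose i : ℝ) * p ^ (r - i) * (1 - p) ^ i := by
    refine Finset.sum_pos' (fun i _ => ?_) ⟨r, Finset.mem_Ico.mpr ⟨hrs, by omega⟩, ?_⟩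
    · have : (0:ℝ) ≤ 1 - p := le_of_lt h1p
      positivity
    · simp only [Nat.choose_self, Nat.sub_self, pow_zero, Nat.cast_one, one_mul]
      positivity
  linarith [hsplit ▸ htotal]

/-- For every `k ≥ 0` and every `p ∈ [0,1)`, there is a unique `x ∈ (0,1)` with
`f_k(x,p) = 0`. -/
theorem stmt_0 (r s : ℕ) (hs : 1 ≤ s) (hrs : s ≤ r) (k : ℕ) (p : ℝ)
    (hp : p ∈ Set.Ico (0 : ℝ) 1) :
    ∃! x : ℝ, x ∈ Set.Ioo (0 : ℝ) 1 ∧ f r s k x p = 0 := by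
  obtain ⟨hp0, hp1⟩ := hp
  set h : ℝ → ℝ := fun y => (k : ℝ) * B r s y + 2 * y with hh
  have hderiv : ∀ x : ℝ, HasDerivAt h
      ((k : ℝ) * ((s : ℝ) * (r.choose s : ℝ) * x ^ (r - s) * (1 - x) ^ (s - 1)) + 2) x := by
    intro x
    have h2y : HasDerivAt (fun y : ℝ => 2 * y) 2 x := by
      simpa using (hasDerivAt_id x).const_mul (2 : ℝ)
    exact ((hasDerivAt_B r s hrs x).const_mul _).add h2y
  have hcont : Continuous h := by
    have : Differentiable ℝ h := fun x => (hderiv x).differentiableAt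
    exact this.continuous
  have hmono : StrictMonoOn h (Set.Icc 0 1) := by
    refine strictMonoOn_of_deriv_pos (convex_Icc 0 1) hcont.continuousOn fun x hx => ?_
    rw [interior_Icc] at hx
    rw [(hderiv x).deriv]
    have hx0 : (0:ℝ) ≤ x := le_of_lt hx.1
    have hx1 : (0:ℝ) ≤ 1 - x := by linarith [hx.2]
    have : (0:ℝ) ≤ (k : ℝ) * ((s : ℝ) * (r.choose s : ℝ) * x ^ (r - s) * (1 - x) ^ (s - 1)) := by
      positivity
    linarith
  have h0 : h 0 = 0 := by simp [hh, B_zero r s hrs]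
  have h1 : h 1 = (k : ℝ) + 2 := by simp [hh, B_one r s hs]
  set c : ℝ := ((k : ℝ) + 1) * B r s p + 1 with hc
  have hcmem : c ∈ Set.Ioo (h 0) (h 1) := by
    rw [h0, h1]
    constructor
    · have := B_nonneg r s p hp0 (le_of_lt hp1)
      have hk : (0:ℝ) ≤ (k:ℝ) := Nat.cast_nonneg k
      nlinarith
    · have := B_lt_one r s hs hrs p hp0 hp1
      have hk : (0:ℝ) ≤ (k:ℝ) := Nat.cast_nonneg k
      nlinarith
  have hIVT := intermediate_value_Ioo (by norm_num : (0:ℝ) ≤ 1) hcont.continuousOn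
  obtain ⟨x, hx, hxc⟩ := hIVT hcmem
  have hfiff : ∀ y : ℝ, f r s k y p = 0 ↔ h y = c := by
    intro y
    unfold f
    simp only [hh, hc]
    constructor <;> intro hy <;> linarith
  refine ⟨x, ⟨hx, (hfiff x).mpr hxc⟩, ?_⟩
  rintro y ⟨hy, hyf⟩
  have hyc : h y = c := (hfiff y).mp hyf
  have hsub : Set.Ioo (0:ℝ) 1 ⊆ Set.Icc 0 1 := Set.Ioo_subset_Icc_self
  exact hmono.injOn (hsub hy) (hsub hx) (hyc.trans hxc.symm)
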